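/- Under the hypotheses that the restricted stationarity equation ∇g_L(φ_L(D_L)) = D_Lᵀ(x - D_L φ_L(D_L)) holds along a differentiable curve of dictionaries, the derivative of the sparse solution satisfies the linear equation K(D_L)·Dφ_L(D_L)H = Hᵀx - (HᵀD_L + D_LᵀH)φ_L, and hence Dφ_L(D_L)H = K(D_L)⁻¹(Hᵀx - (HᵀD_L + D_LᵀH)φ_L), where K(D_L) = Hg_L(φ_L) + D_LᵀD_L is positive definite. -/

import Mathlib

open Matrix

/-- Differentiating the stationarity equation of the sparse solution along a curve
of dictionaries `t ↦ D_L + tH` yields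
`K(D_L)·Dφ_L(D_L)H = Hᵀx - (HᵀD_L + D_LᵀH)φ_L`, hence
`Dφ_L(D_L)H = K(D_L)⁻¹(Hᵀx - (HᵀD_L + D_LᵀH)φ_L)`,
where `K(D_L) = Hg_L(φ_L) + D_LᵀD_L` is positive definite. -/
theorem sparse_solution_derivative (m k : ℕ) (DL H : Matrix (Fin m) (Fin k) ℝ)
    (x : Fin m → ℝ) (g g' g'' : Fin k → ℝ → ℝ)
    (hd1 : ∀ i t, t ≠ 0 → HasDerivAt (g i) (g' i t) t)
    (hd2 : ∀ i t, t ≠ 0 → HasDerivAt (g' i) (g'' i t) t)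
    (hpos : ∀ i t, t ≠ 0 → 0 < g'' i t)
    (φ : ℝ → Fin k → ℝ) (hφ0 : ∀ i, φ 0 i ≠ 0)
    (φ' : Fin k → ℝ) (hdφ : ∀ i, HasDerivAt (fun t => φ t i) (φ' i) 0)
    (hstat : ∀ t : ℝ, ∀ i, g' i (φ t i) =
      (fun j => (DL + t • H) j i) ⬝ᵥ (x - (DL + t • H).mulVec (φ t))) :
    (Matrix.diagonal (fun i => g'' i (φ 0 i)) + DLᵀ * DL).PosDef ∧
    (Matrix.diagonal (fun i => g'' i (φ 0 i)) + DLᵀ * DL).mulVec φ' =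
      Hᵀ.mulVec x - (Hᵀ * DL + DLᵀ * H).mulVec (φ 0) ∧
    φ' = (Matrix.diagonal (fun i => g'' i (φ 0 i)) + DLᵀ * DL)⁻¹.mulVec
      (Hᵀ.mulVec x - (Hᵀ * DL + DLᵀ * H).mulVec (φ 0)) := by
  have hpd : (Matrix.diagonal (fun i => g'' i (φ 0 i)) + DLᵀ * DL).PosDef := by
    have h1 : (Matrix.diagonal (fun i => g'' i (φ 0 i))).PosDef :=
      Matrix.PosDef.diagonal (fun i => hpos i _ (hφ0 i))
    have h2 : (DLᵀ * DL).PosSemidef := by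
      have := Matrix.posSemidef_conjTranspose_mul_self DL
      rwa [Matrix.conjTranspose_eq_transpose_of_trivial] at this
    exact h1.add_posSemidef h2
  -- componentwise derivative identity
  have hderiv : ∀ i, g'' i (φ 0 i) * φ' i =
      (∑ j, H j i * (x j - ∑ l, DL j l * φ 0 l)) +
      ∑ j, DL j i * -(∑ l, (H j l * φ 0 l + DL j l * φ' l)) := by
    intro i
    -- LHS derivative
    have hF : HasDerivAt (fun t => g' i (φ t i)) (g'' i (φ 0 i) * φ' i) 0 :=
      (hd2 i (φ 0 i) (hφ0 i)).comp 0 (hdφ i)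
    -- RHS derivative
    have hG : HasDerivAt
        (fun t => ∑ j, (DL j i + t * H j i) * (x j - ∑ l, (DL j l + t * H j l) * φ t l))
        ((∑ j, H j i * (x j - ∑ l, DL j l * φ 0 l)) +
          ∑ j, DL j i * -(∑ l, (H j l * φ 0 l + DL j l * φ' l))) 0 := by
      rw [← Finset.sum_add_distrib]
      apply HasDerivAt.fun_sum
      intro j _
      have hA : HasDerivAt (fun t : ℝ => DL j i + t * H j i) (H j i) 0 := by
        simpa using ((hasDerivAt_id (0:ℝ)).mul_const (H j i)).const_add (DL j i)
      have hS : HasDerivAt (fun t : ℝ => ∑ l, (DL j l + t * H j l) * φ t l)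
          (∑ l, (H j l * φ 0 l + DL j l * φ' l)) 0 := by
        apply HasDerivAt.fun_sum
        intro l _
        have hAl : HasDerivAt (fun t : ℝ => DL j l + t * H j l) (H j l) 0 := by
          simpa using ((hasDerivAt_id (0:ℝ)).mul_const (H j l)).const_add (DL j l)
        simpa using hAl.fun_mul (hdφ l)
      have hB : HasDerivAt (fun t : ℝ => x j - ∑ l, (DL j l + t * H j l) * φ t l)
          (-(∑ l, (H j l * φ 0 l + DL j l * φ' l))) 0 := hS.const_sub (x j)
      have := hA.fun_mul hB
      simpa using this
    -- the two functions are equal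
    have heq : (fun t => g' i (φ t i)) =
        (fun t => ∑ j, (DL j i + t * H j i) * (x j - ∑ l, (DL j l + t * H j l) * φ t l)) := by
      funext t
      rw [hstat t i]
      simp [dotProduct, Matrix.mulVec, Matrix.add_apply, Matrix.smul_apply, smul_eq_mul,
        mul_comm]
    rw [heq] at hF
    exact hF.unique hG
  have hmain : (Matrix.diagonal (fun i => g'' i (φ 0 i)) + DLᵀ * DL).mulVec φ' =
      Hᵀ.mulVec x - (Hᵀ * DL + DLᵀ * H).mulVec (φ 0) := by
    funext i
    have h := hderiv i
    simp only [Matrix.mulVec, dotProduct, Matrix.add_apply, Matrix.mul_apply,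
      Matrix.diagonal_apply, Matrix.transpose_apply, Pi.sub_apply, Pi.add_apply]
    have swap : ∀ (A B : Matrix (Fin m) (Fin k) ℝ) (v : Fin k → ℝ),
        ∑ j, (∑ r, A r i * B r j) * v j = ∑ r, A r i * ∑ j, B r j * v j := by
      intro A B v
      simp only [Finset.sum_mul]
      rw [Finset.sum_comm]
      exact Finset.sum_congr rfl fun r _ => by
        rw [Finset.mul_sum]; exact Finset.sum_congr rfl fun j _ => by ring
    have hswap1 : ∑ j, (∑ r, DL r i * DL r j) * φ' j
        = ∑ r, DL r i * ∑ j, DL r j * φ' j := swap DL DL φ'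
    have hswap2 : ∑ j, (∑ r, H r i * DL r j + ∑ r, DL r i * H r j) * φ 0 j
        = (∑ r, H r i * ∑ j, DL r j * φ 0 j) + ∑ r, DL r i * ∑ j, H r j * φ 0 j := by
      simp only [add_mul, Finset.sum_add_distrib]
      rw [swap H DL (φ 0), swap DL H (φ 0)]
    simp only [add_mul, Finset.sum_add_distrib, ite_mul, zero_mul]
    rw [Finset.sum_ite_eq Finset.univ i]
    simp only [Finset.mem_univ, if_true]
    rw [hswap1, swap H DL (φ 0), swap DL H (φ 0)]
    simp only [mul_sub, mul_neg, mul_add, Finset.sum_add_distrib, Finset.sum_sub_distrib,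
      Finset.sum_neg_distrib] at h
    linarith [h]
  refine ⟨hpd, hmain, ?_⟩
  have hK := hpd.det_pos.ne'.isUnit
  rw [← hmain, Matrix.mulVec_mulVec, Matrix.nonsing_inv_mul _ hK, Matrix.one_mulVec]
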